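/- Let n ≥ 2 and let K : ℝⁿ → [0,+∞] be measurable, symmetric (K(−x)=K(x) a.e.), and satisfy ∫ min{1,|x|} K(x) dx < +∞. If A ⊂ B ⊂ ℝⁿ are two convex bodies (compact convex sets with non-empty interior), then P_K(A) ≤ P_K(B). -/

import Mathlib

open MeasureTheory Metric Set
open scoped ENNReal RealInnerProductSpace

open Classical in
/-- The non-local `K`-perimeter `P_K(E) = (1/2) ∬ |χ_E(x) - χ_E(y)| K(x-y) dx dy`. -/
noncomputable def PK {n : ℕ} (K : EuclideanSpace ℝ (Fin n) → ℝ≥0∞)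
    (E : Set (EuclideanSpace ℝ (Fin n))) : ℝ≥0∞ :=
  (1 / 2) * ∫⁻ x, ∫⁻ y, (if (x ∈ E) = (y ∈ E) then 0 else K (x - y))

namespace PKaux


/-- Translate of a set. -/
def tr {α : Type*} [Add α] (v : α) (E : Set α) : Set α := (· + v) '' E

lemma mem_tr {α : Type*} [AddGroup α] {v : α} {E : Set α} {x : α} :
    x ∈ tr v E ↔ x - v ∈ E := by
  constructor
  · rintro ⟨y, hy, rfl⟩; simpa using hy
  · intro h; exact ⟨x - v, h, sub_add_cancel x v⟩

lemma tr_eq_preimage {α : Type*} [AddGroup α] (v : α) (E : Set α) :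
    tr v E = (fun x => x - v) ⁻¹' E := by
  ext x; exact mem_tr

lemma tr_tr {α : Type*} [AddGroup α] (v w : α) (E : Set α) :
    tr v (tr w E) = tr (w + v) E := by
  unfold tr; rw [Set.image_image]; simp only [add_assoc]

lemma tr_zero {α : Type*} [AddGroup α] (E : Set α) : tr (0 : α) E = E := by
  ext x; simp [mem_tr]

lemma Ioo_subset_convex {s : Set ℝ} (hs : Convex ℝ s) (hne : s.Nonempty) :
    Ioo (sInf s) (sSup s) ⊆ s := by
  intro x hx
  obtain ⟨u, hu, hux⟩ := exists_lt_of_csInf_lt hne hx.1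
  obtain ⟨v, hv, hxv⟩ := exists_lt_of_lt_csSup hne hx.2
  exact hs.ordConnected.out hu hv ⟨hux.le, hxv.le⟩

lemma min_sub_eq (a b c : ℝ) : min b (a + c) - a = min (b - a) c := by
  rcases le_total b (a + c) with h | h
  · rw [min_eq_left h, min_eq_left (by linarith)]
  · rw [min_eq_right h, min_eq_right (by linarith)]; ring

lemma oneD_upper {s : Set ℝ} (hs : Convex ℝ s) (hb : Bornology.IsBounded s)
    (hne : s.Nonempty) {c : ℝ} (hc : 0 ≤ c) :
    volume (s \ tr c s) ≤ ENNReal.ofReal (min (sSup s - sInf s) c) := by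
  set a := sInf s with ha
  set b := sSup s with hbb
  have hab : a ≤ b := csInf_le_csSup hne hb.bddBelow hb.bddAbove
  have h1 : s \ tr c s ⊆ Icc a (min b (a + c)) ∪ {b} := by
    rintro x ⟨hx, hx2⟩
    have hxI : a ≤ x ∧ x ≤ b := ⟨csInf_le hb.bddBelow hx, le_csSup hb.bddAbove hx⟩
    by_cases hxb : x = b
    · right; simp [hxb]
    left
    refine ⟨hxI.1, le_min hxI.2 ?_⟩
    by_contra h
    push_neg at h
    have hxb' : x < b := lt_of_le_of_ne hxI.2 hxb
    have hmem : x - c ∈ Ioo a b := ⟨by linarith, by linarith⟩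
    exact hx2 ⟨x - c, Ioo_subset_convex hs hne hmem, by ring⟩
  calc volume (s \ tr c s) ≤ volume (Icc a (min b (a + c)) ∪ {b}) := measure_mono h1
    _ ≤ volume (Icc a (min b (a + c))) + volume ({b} : Set ℝ) := measure_union_le _ _
    _ = ENNReal.ofReal (min (b - a) c) := by
        rw [Real.volume_Icc, Real.volume_singleton, add_zero, min_sub_eq]

lemma oneD_lower {s : Set ℝ} (hs : Convex ℝ s) (hb : Bornology.IsBounded s)
    (hne : s.Nonempty) {c : ℝ} (hc : 0 ≤ c) :
    ENNReal.ofReal (min (sSup s - sInf s) c) ≤ volume (s \ tr c s) := by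
  set a := sInf s with ha
  set b := sSup s with hbb
  have h2 : Ioo a (min b (a + c)) ⊆ s \ tr c s := by
    rintro x ⟨hx1, hx2⟩
    refine ⟨Ioo_subset_convex hs hne ⟨hx1, lt_of_lt_of_le hx2 (min_le_left _ _)⟩, ?_⟩
    rintro ⟨y, hy, rfl⟩
    have h1 : a ≤ y := csInf_le hb.bddBelow hy
    have h2 : y + c < a + c := lt_of_lt_of_le hx2 (min_le_right _ _)
    linarith
  calc ENNReal.ofReal (min (b - a) c) = volume (Ioo a (min b (a + c))) := by
        rw [Real.volume_Ioo, min_sub_eq]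
    _ ≤ volume (s \ tr c s) := measure_mono h2

lemma oneD_mono_nonneg {s t : Set ℝ} (hs : Convex ℝ s) (ht : Convex ℝ t) (hst : s ⊆ t)
    (htb : Bornology.IsBounded t) {c : ℝ} (hc : 0 ≤ c) :
    volume (s \ tr c s) ≤ volume (t \ tr c t) := by
  rcases s.eq_empty_or_nonempty with rfl | hne
  · simp
  have htne : t.Nonempty := hne.mono hst
  have hsb : Bornology.IsBounded s := htb.subset hst
  refine (oneD_upper hs hsb hne hc).trans (le_trans ?_ (oneD_lower ht htb htne hc))
  apply ENNReal.ofReal_le_ofReal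
  have h1 : sInf t ≤ sInf s := csInf_le_csInf htb.bddBelow hne hst
  have h2 : sSup s ≤ sSup t := csSup_le_csSup htb.bddAbove hne hst
  exact min_le_min (by linarith) le_rfl

lemma neg_diff_tr (s : Set ℝ) (c : ℝ) :
    (-s) \ tr (-c) (-s) = -(s \ tr c s) := by
  ext x
  have e1 : x - -c ∈ -s ↔ -x - c ∈ s := by
    rw [mem_neg]
    constructor
    · intro h; have e : -x - c = -(x - -c) := by ring
      rw [e]; exact h
    · intro h; have e : -(x - -c) = -x - c := by ring
      rw [e]; exact h
  simp only [mem_diff, mem_neg, mem_tr, e1]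

lemma oneD_mono {s t : Set ℝ} (hs : Convex ℝ s) (ht : Convex ℝ t) (hst : s ⊆ t)
    (htb : Bornology.IsBounded t) (c : ℝ) :
    volume (s \ tr c s) ≤ volume (t \ tr c t) := by
  rcases le_or_gt 0 c with hc | hc
  · exact oneD_mono_nonneg hs ht hst htb hc
  · have h1 := oneD_mono_nonneg hs.neg ht.neg (neg_subset_neg.mpr hst) htb.neg
      (c := -c) (by linarith)
    rwa [neg_diff_tr, neg_diff_tr, Measure.measure_neg, Measure.measure_neg] at h1

lemma tr_measurableSet {n : ℕ} {E : Set (EuclideanSpace ℝ (Fin n))} (hE : MeasurableSet E)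
    (v : EuclideanSpace ℝ (Fin n)) : MeasurableSet (tr v E) := by
  rw [tr_eq_preimage]
  exact hE.preimage (measurable_id.sub_const v)

lemma volume_tr {n : ℕ} (v : EuclideanSpace ℝ (Fin n)) {E : Set (EuclideanSpace ℝ (Fin n))}
    (hE : MeasurableSet E) : volume (tr v E) = volume E := by
  rw [tr_eq_preimage]
  exact (measurePreserving_sub_right volume v).measure_preimage hE.nullMeasurableSet

variable {m : ℕ}

/-- The insertion map `ℝ × ℝ^m → ℝ^{m+1}`. -/
noncomputable def ins (t : ℝ) (w : Fin m → ℝ) : EuclideanSpace ℝ (Fin (m + 1)) :=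
  (WithLp.equiv 2 _).symm (Fin.cons t w)

/-- Slice of a set along the first coordinate direction. -/
def sl (w : Fin m → ℝ) (S : Set (EuclideanSpace ℝ (Fin (m + 1)))) : Set ℝ :=
  {t | ins t w ∈ S}

lemma ins_apply_zero (t : ℝ) (w : Fin m → ℝ) : ins t w 0 = t := rfl

lemma ins_apply_succ (t : ℝ) (w : Fin m → ℝ) (j : Fin m) : ins t w j.succ = w j := by
  show (Fin.cons t w : ∀ _ : Fin (m+1), ℝ) j.succ = w j
  exact Fin.cons_succ _ _ _

lemma coord_le_norm (x : EuclideanSpace ℝ (Fin (m + 1))) (i : Fin (m + 1)) : |x i| ≤ ‖x‖ := by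
  rw [EuclideanSpace.norm_eq, ← Real.sqrt_sq_eq_abs]
  apply Real.sqrt_le_sqrt
  have := Finset.single_le_sum (f := fun j => ‖x j‖ ^ 2) (fun j _ => sq_nonneg _)
    (Finset.mem_univ i)
  simpa [Real.norm_eq_abs, sq_abs] using this

lemma ins_comb (θ₁ θ₂ t₁ t₂ : ℝ) (hθ : θ₁ + θ₂ = 1) (w : Fin m → ℝ) :
    ins (θ₁ * t₁ + θ₂ * t₂) w = θ₁ • ins t₁ w + θ₂ • ins t₂ w := by
  ext i
  induction i using Fin.cases with
  | zero => simp [ins_apply_zero, PiLp.add_apply, PiLp.smul_apply, smul_eq_mul]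
  | succ j =>
    simp only [PiLp.add_apply, PiLp.smul_apply, ins_apply_succ, smul_eq_mul]
    rw [← add_mul, hθ, one_mul]

lemma sl_convex {S : Set (EuclideanSpace ℝ (Fin (m + 1)))} (hS : Convex ℝ S) (w : Fin m → ℝ) :
    Convex ℝ (sl w S) := by
  intro t₁ h₁ t₂ h₂ θ₁ θ₂ hθ₁ hθ₂ hθ
  show ins (θ₁ • t₁ + θ₂ • t₂) w ∈ S
  rw [smul_eq_mul, smul_eq_mul, ins_comb θ₁ θ₂ t₁ t₂ hθ]
  exact hS h₁ h₂ hθ₁ hθ₂ hθ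

lemma sl_bounded {S : Set (EuclideanSpace ℝ (Fin (m + 1)))} (hS : Bornology.IsBounded S)
    (w : Fin m → ℝ) : Bornology.IsBounded (sl w S) := by
  obtain ⟨R, hR⟩ := hS.subset_closedBall 0
  have : sl w S ⊆ Icc (-R) R := by
    intro t ht
    have h1 : ‖ins t w‖ ≤ R := by simpa using hR ht
    have h2 : |t| ≤ ‖ins t w‖ := by
      rw [← ins_apply_zero t w]
      exact coord_le_norm _ 0
    have := h2.trans h1
    exact ⟨neg_le_of_abs_le this, le_of_abs_le this⟩
  exact (Metric.isBounded_Icc _ _).subset this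

lemma ins_sub_single (t c : ℝ) (w : Fin m → ℝ) :
    ins t w - EuclideanSpace.single (0 : Fin (m + 1)) c = ins (t - c) w := by
  ext i
  induction i using Fin.cases with
  | zero => simp [PiLp.sub_apply, ins_apply_zero, EuclideanSpace.single_apply]
  | succ j => simp [PiLp.sub_apply, ins_apply_succ, EuclideanSpace.single_apply,
      (Fin.succ_ne_zero j)]

lemma sl_diff (w : Fin m → ℝ) (S T : Set (EuclideanSpace ℝ (Fin (m + 1)))) :
    sl w (S \ T) = sl w S \ sl w T := rfl

lemma sl_tr (w : Fin m → ℝ) (S : Set (EuclideanSpace ℝ (Fin (m + 1)))) (c : ℝ) :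
    sl w (tr (EuclideanSpace.single (0 : Fin (m + 1)) c) S) = tr c (sl w S) := by
  ext t
  rw [mem_tr]
  show ins t w ∈ tr _ S ↔ _
  rw [mem_tr, ins_sub_single]
  exact Iff.rfl

/-- Fubini: the volume of a measurable set is the integral of the 1D volumes of its slices. -/
lemma vol_eq_lintegral_sl {S : Set (EuclideanSpace ℝ (Fin (m + 1)))} (hS : MeasurableSet S) :
    volume S = ∫⁻ w : Fin m → ℝ, volume (sl w S) := by
  set Ψ := (MeasurableEquiv.toLp 2 (Fin (m + 1) → ℝ)).symm.trans
    (MeasurableEquiv.piFinSuccAbove (fun _ => ℝ) 0) with hΨdef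
  have hΨ : MeasurePreserving Ψ volume volume :=
    (volume_preserving_piFinSuccAbove (fun _ : Fin (m + 1) => ℝ) 0).comp
      (EuclideanSpace.volume_preserving_symm_measurableEquiv_toLp (Fin (m + 1)))
  have hΨins : ∀ (t : ℝ) (w : Fin m → ℝ), Ψ (ins t w) = (t, w) := by
    intro t w
    show (MeasurableEquiv.piFinSuccAbove (fun _ => ℝ) 0)
      ((MeasurableEquiv.toLp 2 (Fin (m + 1) → ℝ)).symm (ins t w)) = (t, w)
    have h1 : (MeasurableEquiv.toLp 2 (Fin (m + 1) → ℝ)).symm (ins t w) = Fin.cons t w := rfl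
    rw [h1]
    ext
    · rfl
    · simp [MeasurableEquiv.piFinSuccAbove, Fin.zero_succAbove]
  have himg : volume (Ψ '' S) = volume S := by
    have h2 : Ψ '' S = Ψ.symm ⁻¹' S := by
      ext x; exact ⟨fun ⟨y, hy, hxy⟩ => by simpa [← hxy] using hy,
        fun h => ⟨Ψ.symm x, h, Ψ.apply_symm_apply x⟩⟩
    rw [h2]
    exact (MeasurePreserving.symm Ψ hΨ).measure_preimage hS.nullMeasurableSet
  have hSm : MeasurableSet (Ψ '' S) := Ψ.measurableSet_image.mpr hS
  rw [← himg]
  rw [Measure.volume_eq_prod]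
  rw [Measure.prod_apply_symm hSm]
  congr 1
  funext w
  congr 1
  ext t
  simp only [mem_preimage]
  constructor
  · rintro ⟨x, hx, hxe⟩
    have : x = ins t w := by
      apply Ψ.injective
      rw [hxe, hΨins]
    rw [this] at hx; exact hx
  · intro h
    exact ⟨ins t w, h, hΨins t w⟩


lemma key_aligned {m : ℕ} {A B : Set (EuclideanSpace ℝ (Fin (m + 1)))}
    (hA : Convex ℝ A) (hAm : MeasurableSet A)
    (hB : Convex ℝ B) (hBb : Bornology.IsBounded B) (hBm : MeasurableSet B)
    (hAB : A ⊆ B) (c : ℝ) :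
    volume (A \ tr (EuclideanSpace.single (0 : Fin (m + 1)) c) A)
      ≤ volume (B \ tr (EuclideanSpace.single (0 : Fin (m + 1)) c) B) := by
  set v := EuclideanSpace.single (0 : Fin (m + 1)) c
  rw [vol_eq_lintegral_sl (hAm.diff (tr_measurableSet hAm v)),
    vol_eq_lintegral_sl (hBm.diff (tr_measurableSet hBm v))]
  apply lintegral_mono
  intro w
  show volume (sl w (A \ tr v A)) ≤ volume (sl w (B \ tr v B))
  rw [sl_diff, sl_diff, sl_tr, sl_tr]
  exact oneD_mono (sl_convex hA w) (sl_convex hB w) (fun t ht => hAB ht)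
    (sl_bounded hBb w) c

lemma key {m : ℕ} {A B : Set (EuclideanSpace ℝ (Fin (m + 1)))}
    (hA : Convex ℝ A) (hAm : MeasurableSet A)
    (hB : Convex ℝ B) (hBb : Bornology.IsBounded B) (hBm : MeasurableSet B)
    (hAB : A ⊆ B) (z : EuclideanSpace ℝ (Fin (m + 1))) :
    volume (A \ tr z A) ≤ volume (B \ tr z B) := by
  set c : ℝ := ‖z‖ with hc
  set v := EuclideanSpace.single (0 : Fin (m + 1)) c with hv
  have hnorm : ‖z‖ = ‖v‖ := by
    rw [hv, EuclideanSpace.norm_single, Real.norm_eq_abs, hc, abs_of_nonneg (norm_nonneg z)]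
  set ρ : EuclideanSpace ℝ (Fin (m + 1)) ≃ₗᵢ[ℝ] EuclideanSpace ℝ (Fin (m + 1)) :=
    Submodule.reflection (ℝ ∙ (z - v))ᗮ with hρ
  have hρz : ρ z = v := Submodule.reflection_sub hnorm
  have hvol : ∀ S : Set (EuclideanSpace ℝ (Fin (m + 1))), MeasurableSet S →
      volume (⇑ρ '' S) = volume S := by
    intro S hS
    have h2 : ⇑ρ '' S = ⇑ρ.symm ⁻¹' S := by
      ext x
      exact ⟨fun ⟨y, hy, hxy⟩ => by simp only [mem_preimage, ← hxy,
        LinearIsometryEquiv.symm_apply_apply]; exact hy,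
        fun h => ⟨ρ.symm x, h, ρ.apply_symm_apply x⟩⟩
    rw [h2]
    exact ρ.symm.measurePreserving.measure_preimage hS.nullMeasurableSet
  have hcomm : ∀ S : Set (EuclideanSpace ℝ (Fin (m + 1))),
      ⇑ρ '' tr z S = tr v (⇑ρ '' S) := by
    intro S
    ext x
    constructor
    · rintro ⟨y, ⟨u, hu, rfl⟩, rfl⟩
      exact ⟨ρ u, ⟨u, hu, rfl⟩, by rw [map_add, hρz]⟩
    · rintro ⟨y, ⟨u, hu, rfl⟩, rfl⟩
      exact ⟨u + z, ⟨u, hu, rfl⟩, by rw [map_add, hρz]⟩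
  have hmeasimg : ∀ S : Set (EuclideanSpace ℝ (Fin (m + 1))), MeasurableSet S →
      MeasurableSet (⇑ρ '' S) :=
    fun S hS => ρ.toMeasurableEquiv.measurableSet_image.mpr hS
  have hAd : MeasurableSet (A \ tr z A) := hAm.diff (tr_measurableSet hAm z)
  have hBd : MeasurableSet (B \ tr z B) := hBm.diff (tr_measurableSet hBm z)
  rw [← hvol _ hAd, ← hvol _ hBd, image_diff ρ.injective, image_diff ρ.injective,
    hcomm, hcomm]
  have hconv : ∀ S : Set (EuclideanSpace ℝ (Fin (m + 1))), Convex ℝ S →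
      Convex ℝ (⇑ρ '' S) := by
    intro S hS
    have := hS.linear_image ρ.toLinearEquiv.toLinearMap
    exact this
  exact key_aligned (hconv A hA) (hmeasimg A hAm) (hconv B hB)
    (ρ.lipschitz.isBounded_image hBb)
    (hmeasimg B hBm) (image_mono hAB) c


open Classical in
lemma PK_eq {N : ℕ} (K : EuclideanSpace ℝ (Fin N) → ℝ≥0∞) (hK : Measurable K)
    {E : Set (EuclideanSpace ℝ (Fin N))} (hE : MeasurableSet E) :
    PK K E = 1 / 2 * ∫⁻ z, K z * (volume (E \ tr z E) + volume (E \ tr (-z) E)) := by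
  unfold PK
  congr 1
  have step1 : ∀ x : EuclideanSpace ℝ (Fin N),
      (∫⁻ y, if (x ∈ E) = (y ∈ E) then 0 else K (x - y))
        = ∫⁻ z, if (x ∈ E) = ((x - z) ∈ E) then 0 else K z := by
    intro x
    have h := ((Measure.measurePreserving_sub_left
        (volume : Measure (EuclideanSpace ℝ (Fin N))) x).lintegral_comp_emb
      (MeasurableEquiv.subLeft x).measurableEmbedding
      (fun y => if (x ∈ E) = (y ∈ E) then 0 else K (x - y)))
    rw [← h]
    congr 1
    funext z
    show (if (x ∈ E) = ((x - z) ∈ E) then 0 else K (x - (x - z)))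
      = if (x ∈ E) = ((x - z) ∈ E) then 0 else K z
    rw [sub_sub_cancel]
  rw [lintegral_congr step1]
  have hset : MeasurableSet {p : EuclideanSpace ℝ (Fin N) × EuclideanSpace ℝ (Fin N) |
      (p.1 ∈ E) = ((p.1 - p.2) ∈ E)} := by
    have heq : {p : EuclideanSpace ℝ (Fin N) × EuclideanSpace ℝ (Fin N) |
        (p.1 ∈ E) = ((p.1 - p.2) ∈ E)}
        = ((fun p : EuclideanSpace ℝ (Fin N) × EuclideanSpace ℝ (Fin N) => p.1) ⁻¹' E
            ∩ (fun p : EuclideanSpace ℝ (Fin N) × EuclideanSpace ℝ (Fin N) => p.1 - p.2) ⁻¹' E)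
          ∪ (((fun p : EuclideanSpace ℝ (Fin N) × EuclideanSpace ℝ (Fin N) => p.1) ⁻¹' E)ᶜ
            ∩ ((fun p : EuclideanSpace ℝ (Fin N) × EuclideanSpace ℝ (Fin N) => p.1 - p.2) ⁻¹' E)ᶜ) := by
      ext p
      simp only [eq_iff_iff, mem_setOf_eq, mem_union, mem_inter_iff, mem_preimage, mem_compl_iff]
      tauto
    rw [heq]
    have h1 : Measurable (fun p : EuclideanSpace ℝ (Fin N) × EuclideanSpace ℝ (Fin N) => p.1) :=
      measurable_fst
    have h2 : Measurable (fun p : EuclideanSpace ℝ (Fin N) × EuclideanSpace ℝ (Fin N) =>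
      p.1 - p.2) := measurable_fst.sub measurable_snd
    exact ((hE.preimage h1).inter (hE.preimage h2)).union
      ((hE.preimage h1).compl.inter (hE.preimage h2).compl)
  have hmeas : Measurable (Function.uncurry fun (x z : EuclideanSpace ℝ (Fin N)) =>
      if (x ∈ E) = ((x - z) ∈ E) then 0 else K z) :=
    Measurable.ite hset measurable_const (hK.comp measurable_snd)
  rw [lintegral_lintegral_swap hmeas.aemeasurable]
  apply lintegral_congr
  intro z
  have hDeq : {x : EuclideanSpace ℝ (Fin N) | ¬((x ∈ E) = ((x - z) ∈ E))}
      = (E \ tr z E) ∪ (tr z E \ E) := by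
    ext x
    simp only [mem_setOf_eq, eq_iff_iff, mem_union, mem_diff, mem_tr]
    tauto
  have hDm : MeasurableSet {x : EuclideanSpace ℝ (Fin N) | ¬((x ∈ E) = ((x - z) ∈ E))} := by
    rw [hDeq]
    exact (hE.diff (tr_measurableSet hE z)).union ((tr_measurableSet hE z).diff hE)
  have hfun : (fun x : EuclideanSpace ℝ (Fin N) => if (x ∈ E) = ((x - z) ∈ E) then 0 else K z)
      = Set.indicator {x : EuclideanSpace ℝ (Fin N) | ¬((x ∈ E) = ((x - z) ∈ E))}
          (fun _ => K z) := by
    funext x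
    by_cases h : (x ∈ E) = ((x - z) ∈ E)
    · rw [if_pos h, Set.indicator_apply]
      exact (if_neg (not_not_intro h)).symm
    · rw [if_neg h, Set.indicator_apply]
      exact (if_pos h).symm
  rw [hfun, lintegral_indicator_const hDm]
  congr 1
  rw [hDeq, measure_union disjoint_sdiff_sdiff ((tr_measurableSet hE z).diff hE)]
  congr 1
  have h3 : tr z (E \ tr (-z) E) = tr z E \ E := by
    have h4 : tr z (E \ tr (-z) E) = tr z E \ tr z (tr (-z) E) := by
      unfold tr
      exact image_diff (add_left_injective z) _ _
    rw [h4, tr_tr, neg_add_cancel, tr_zero]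
  rw [← h3, volume_tr z (hE.diff (tr_measurableSet hE (-z)))]

end PKaux

/-- Monotonicity of the non-local `K`-perimeter on nested convex bodies. -/
theorem stmt3 (n : ℕ) (hn : 2 ≤ n) (K : EuclideanSpace ℝ (Fin n) → ℝ≥0∞)
    (hKmeas : Measurable K)
    (hKsym : ∀ᵐ x : EuclideanSpace ℝ (Fin n), K (-x) = K x)
    (hKint : (∫⁻ x : EuclideanSpace ℝ (Fin n), min 1 (ENNReal.ofReal ‖x‖) * K x) < ⊤)
    (A B : Set (EuclideanSpace ℝ (Fin n)))
    (hAcomp : IsCompact A) (hAconv : Convex ℝ A) (hAint : (interior A).Nonempty)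
    (hBcomp : IsCompact B) (hBconv : Convex ℝ B) (hBint : (interior B).Nonempty)
    (hAB : A ⊆ B) :
    PK K A ≤ PK K B := by
  obtain ⟨m, rfl⟩ : ∃ m, n = m + 1 := ⟨n - 1, by omega⟩
  have hAm := hAcomp.measurableSet
  have hBm := hBcomp.measurableSet
  rw [PKaux.PK_eq K hKmeas hAm, PKaux.PK_eq K hKmeas hBm]
  apply mul_le_mul_right
  apply lintegral_mono
  intro z
  apply mul_le_mul_right
  exact add_le_add
    (PKaux.key hAconv hAm hBconv hBcomp.isBounded hBm hAB z)
    (PKaux.key hAconv hAm hBconv hBcomp.isBounded hBm hAB (-z))
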